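/- Consider n agents N = {1,…,n} equipped with a graph distance d : N × N → ℕ, a radius κ ∈ ℕ, and κ-neighborhoods N_i^κ := {j ∈ N : d(i,j) ≤ κ}. Let S = ∏_{j∈N} S_j and A = ∏_{j∈N} A_j be finite products, let γ ∈ [0,1), and fix an agent i. Let ν be a probability distribution on S, and for each j let π_j(θ_j)(· | s_{N_j^κ}) be a positive probability distribution on A_j, differentiable in θ_j and depending on s only through the coordinates in N_j^κ; given s ∼ ν, let a ∼ ∏_j π_j(θ_j)(·|s_{N_j^κ}) (product conditional law). Let ψ_i(a_i | s_{N_i^κ}) := ∇_{θ_i} log π_i(θ_i)(a_i | s_{N_i^κ}) and assume ‖ψ_i(a_i|s_{N_i^κ})‖ ≤ M_ψ for all (s,a). Suppose functions Q_j : S × A → ℝ and Q̂_j : S_{N_j^κ} × A_{N_j^κ} → ℝ (for j ∈ N) satisfy sup_{(s,a)} |Q̂_j(s_{N_j^κ}, a_{N_j^κ}) − Q_j(s,a)| ≤ c₀ φ₀^κ for constants c₀ ≥ 0 and φ₀ ∈ (0,1). Define g := (1/(1−γ)) · E_{(s,a)}[ ψ_i(a_i|s_{N_i^κ}) · (1/n)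 ∑_{j∈N} Q_j(s,a) ] and ĝ := (1/(1−γ)) · E_{(s,a)}[ ψ_i(a_i|s_{N_i^κ}) · (1/n) ∑_{j∈N_i^κ} Q̂_j(s_{N_j^κ}, a_{N_j^κ}) ]. Then ‖ĝ − g‖ ≤ c₀ φ₀^κ M_ψ / (1−γ). -/

import Mathlib

open Finset

lemma sum_pi_split_zero {n : ℕ} (A : Fin n → Type*) [∀ j, Fintype (A j)] (i : Fin n)
    {E : Type*} [AddCommMonoid E] [Module ℝ E]
    (F : (∀ k, A k) → E) (p : A i → ℝ) (K : (∀ j : {j // j ≠ i}, A j) → A i → E)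
    (hF : ∀ a, F a = p (a i) • K (fun j => a j) (a i))
    (hz : ∀ r, ∑ ai, p ai • K r ai = 0) :
    ∑ a, F a = 0 := by
  rw [← Equiv.sum_comp (Equiv.piSplitAt i A).symm F, Fintype.sum_prod_type]
  have h1 : ∀ (ai : A i) (r : ∀ j : {j // j ≠ i}, A j),
      ((Equiv.piSplitAt i A).symm (ai, r)) i = ai := by
    intro ai r; simp [Equiv.piSplitAt]
  have h2 : ∀ (ai : A i) (r : ∀ j : {j // j ≠ i}, A j),
      (fun j : {j // j ≠ i} => ((Equiv.piSplitAt i A).symm (ai, r)) j.1) = r := by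
    intro ai r; funext j; simp [Equiv.piSplitAt, j.2]
  have hF' : ∀ (ai : A i) (r : ∀ j : {j // j ≠ i}, A j),
      F ((Equiv.piSplitAt i A).symm (ai, r)) = p ai • K r ai := by
    intro ai r; rw [hF, h1, h2]
  simp only [hF']
  rw [Finset.sum_comm]
  simp [hz]

/-- Proposition 1: the truncated policy gradient estimator `ĝ`, which replaces
the local shadow Q-functions `Q_j` by truncated Q-functions `Q̂_j` of agents in
the κ-neighborhood of agent `i` only, approximates the exact policy gradient
component `g = ∇_{θ_i} F(θ)` up to error `c₀ φ₀^κ M_ψ / (1 - γ)`. -/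
theorem stmt3 {n : ℕ} (hn : 0 < n)
    (dist : Fin n → Fin n → ℕ) (hdist_symm : ∀ j k, dist j k = dist k j)
    (κ : ℕ) (i : Fin n)
    (S A : Fin n → Type*) [∀ j, Fintype (S j)] [∀ j, Fintype (A j)]
    (γ : ℝ) (hγ : γ ∈ Set.Ico (0 : ℝ) 1)
    (ν : (∀ k, S k) → ℝ) (hν0 : ∀ s, 0 ≤ ν s) (hν1 : ∑ s, ν s = 1)
    (dp : Fin n → ℕ)
    (θ : ∀ j, EuclideanSpace ℝ (Fin (dp j)))
    (π : ∀ j, EuclideanSpace ℝ (Fin (dp j)) → (∀ k, S k) → A j → ℝ)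
    (hπpos : ∀ j θj s aj, 0 < π j θj s aj)
    (hπsum : ∀ j θj s, ∑ aj, π j θj s aj = 1)
    (hπloc : ∀ j θj s s', (∀ k, dist j k ≤ κ → s k = s' k) → π j θj s = π j θj s')
    (hπdiff : ∀ j s aj, Differentiable ℝ (fun θj => π j θj s aj))
    (Mψ c₀ φ₀ : ℝ) (hMψ : 0 ≤ Mψ) (hc₀ : 0 ≤ c₀) (hφ₀ : φ₀ ∈ Set.Ioo (0 : ℝ) 1)
    (ψ : (∀ k, S k) → A i → EuclideanSpace ℝ (Fin (dp i)))
    (hψ : ∀ s ai, ψ s ai = gradient (fun θi => Real.log (π i θi s ai)) (θ i))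
    (hψbdd : ∀ s ai, ‖ψ s ai‖ ≤ Mψ)
    (Q Qhat : Fin n → (∀ k, S k) → (∀ k, A k) → ℝ)
    (hQhatloc : ∀ j s a s' a',
      (∀ k, dist j k ≤ κ → s k = s' k ∧ a k = a' k) → Qhat j s a = Qhat j s' a')
    (hQerr : ∀ j s a, |Qhat j s a - Q j s a| ≤ c₀ * φ₀ ^ κ)
    (g ghat : EuclideanSpace ℝ (Fin (dp i)))
    (hg : g = (1 / (1 - γ)) • ∑ s : ∀ k, S k, ∑ a : ∀ k, A k,
      ((ν s * ∏ j, π j (θ j) s (a j)) * ((1 / (n : ℝ)) * ∑ j, Q j s a)) • ψ s (a i))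
    (hghat : ghat = (1 / (1 - γ)) • ∑ s : ∀ k, S k, ∑ a : ∀ k, A k,
      ((ν s * ∏ j, π j (θ j) s (a j)) *
        ((1 / (n : ℝ)) * ∑ j ∈ Finset.univ.filter (fun j => dist i j ≤ κ), Qhat j s a)) •
          ψ s (a i)) :
    ‖ghat - g‖ ≤ c₀ * φ₀ ^ κ * Mψ / (1 - γ) := by
  classical
  obtain ⟨hγ0, hγ1⟩ := hγ
  have h1γ : (0:ℝ) < 1 - γ := by linarith
  set ε : ℝ := c₀ * φ₀ ^ κ with hεdef
  have hε0 : 0 ≤ ε := mul_nonneg hc₀ (pow_nonneg (le_of_lt hφ₀.1) κ)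
  -- nonemptiness
  have hSne : Nonempty (∀ k, S k) := by
    by_contra h
    rw [not_nonempty_iff] at h
    rw [Finset.univ_eq_empty, Finset.sum_empty] at hν1
    norm_num at hν1
  have hAne : ∀ k, Nonempty (A k) := by
    intro k
    by_contra h
    rw [not_nonempty_iff] at h
    have := hπsum k (θ k) (Classical.arbitrary _)
    rw [Finset.univ_eq_empty, Finset.sum_empty] at this
    norm_num at this
  have : ∀ k, Nonempty (A k) := hAne
  -- score has zero mean
  have scoreZero : ∀ s, ∑ ai : A i, π i (θ i) s ai • ψ s ai = 0 := by
    intro s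
    have h1 : ∀ ai, π i (θ i) s ai • ψ s ai = gradient (fun θi => π i θi s ai) (θ i) := by
      intro ai
      have hd := (hπdiff i s ai) (θ i)
      have hlog : fderiv ℝ (fun θi => Real.log (π i θi s ai)) (θ i)
          = (π i (θ i) s ai)⁻¹ • fderiv ℝ (fun θi => π i θi s ai) (θ i) :=
        (hd.hasFDerivAt.log (ne_of_gt (hπpos i (θ i) s ai))).fderiv
      rw [hψ]
      simp only [gradient, hlog, map_smul, smul_smul,
        mul_inv_cancel₀ (ne_of_gt (hπpos i (θ i) s ai)), one_smul]
    rw [Finset.sum_congr rfl fun ai _ => h1 ai]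
    simp only [gradient, ← map_sum]
    have hsumf : fderiv ℝ (fun θi => ∑ ai : A i, π i θi s ai) (θ i)
        = ∑ ai : A i, fderiv ℝ (fun θi => π i θi s ai) (θ i) :=
      fderiv_fun_sum (fun ai _ => (hπdiff i s ai) (θ i))
    have hconst : (fun θi => ∑ ai : A i, π i θi s ai) = fun _ => (1:ℝ) :=
      funext fun θi => hπsum i θi s
    rw [← hsumf, hconst, fderiv_fun_const]
    simp
  -- far agents contribute zero
  have farZero : ∀ j : Fin n, ¬ dist i j ≤ κ → ∀ s : ∀ k, S k,
      ∑ a : ∀ k, A k, ((ν s * ∏ k, π k (θ k) s (a k)) * Qhat j s a) • ψ s (a i) = 0 := by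
    intro j hj s
    set ai₀ : A i := Classical.arbitrary (A i) with hai₀
    set rc : (∀ l : {l // l ≠ i}, A l) → (∀ k, A k) :=
      fun r => (Equiv.piSplitAt i A).symm (ai₀, r) with hrc
    have hrck : ∀ r (k : Fin n) (hk : k ≠ i), rc r k = r ⟨k, hk⟩ := by
      intro r k hk; simp [hrc, Equiv.piSplitAt, hk]
    apply sum_pi_split_zero A i _ (π i (θ i) s)
      (fun r ai => ((ν s * ∏ k ∈ Finset.univ.erase i, π k (θ k) s (rc r k))
        * Qhat j s (rc r)) • ψ s ai)
    · intro a
      have hQ : Qhat j s a = Qhat j s (rc (fun l => a l)) := by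
        apply hQhatloc
        intro k hk
        refine ⟨rfl, ?_⟩
        have hki : k ≠ i := by
          rintro rfl
          exact hj (by rw [hdist_symm]; exact hk)
        rw [hrck _ k hki]
      have hP : ∀ k ∈ Finset.univ.erase i,
          π k (θ k) s (rc (fun l => a l) k) = π k (θ k) s (a k) := by
        intro k hk
        rw [hrck _ k (Finset.ne_of_mem_erase hk)]
      rw [Finset.prod_congr rfl hP, ← hQ, smul_smul,
        ← Finset.mul_prod_erase Finset.univ (fun k => π k (θ k) s (a k)) (Finset.mem_univ i)]
      congr 1
      ring
    · intro r
      rw [Finset.sum_congr rfl fun ai _ => smul_comm (π i (θ i) s ai) _ (ψ s ai),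
        ← Finset.smul_sum, scoreZero s, smul_zero]
  -- weights sum to one
  have hwsum : ∑ s : ∀ k, S k, ∑ a : ∀ k, A k, (ν s * ∏ k, π k (θ k) s (a k)) = 1 := by
    have h1 : ∀ s, ∑ a : ∀ k, A k, ∏ k, π k (θ k) s (a k) = 1 := by
      intro s
      rw [← Fintype.prod_sum]
      simp [hπsum]
    simp_rw [← Finset.mul_sum, h1, mul_one, hν1]
  -- pointwise split
  have hsplit : ∀ (s : ∀ k, S k) (a : ∀ k, A k),
      ((ν s * ∏ k, π k (θ k) s (a k)) *
        ((1 / (n : ℝ)) * ∑ j ∈ Finset.univ.filter (fun j => dist i j ≤ κ), Qhat j s a)) • ψ s (a i)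
      - ((ν s * ∏ k, π k (θ k) s (a k)) * ((1 / (n : ℝ)) * ∑ j, Q j s a)) • ψ s (a i)
      = ((ν s * ∏ k, π k (θ k) s (a k)) *
          ((1 / (n : ℝ)) * ∑ j, (Qhat j s a - Q j s a))) • ψ s (a i)
        - ∑ j ∈ Finset.univ.filter (fun j => ¬ dist i j ≤ κ),
            ((1 / (n : ℝ)) * ((ν s * ∏ k, π k (θ k) s (a k)) * Qhat j s a)) • ψ s (a i) := by
    intro s a
    rw [← Finset.sum_smul, ← sub_smul, ← sub_smul]
    congr 1
    have hfil := Finset.sum_filter_add_sum_filter_not Finset.univ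
      (fun j => dist i j ≤ κ) (fun j => Qhat j s a)
    set W := ν s * ∏ k, π k (θ k) s (a k) with hW
    rw [Finset.sum_sub_distrib]
    rw [show (∑ j ∈ Finset.univ.filter (fun j => ¬ dist i j ≤ κ),
        (1 / (n : ℝ)) * (W * Qhat j s a))
        = (1 / (n : ℝ)) * (W * ∑ j ∈ Finset.univ.filter (fun j => ¬ dist i j ≤ κ), Qhat j s a)
      from by rw [Finset.mul_sum, Finset.mul_sum]]
    linear_combination (W * (1 / (n : ℝ))) * hfil
  -- the correction term vanishes
  have hT2 : ∑ s : ∀ k, S k, ∑ a : ∀ k, A k,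
      ∑ j ∈ Finset.univ.filter (fun j => ¬ dist i j ≤ κ),
        ((1 / (n : ℝ)) * ((ν s * ∏ k, π k (θ k) s (a k)) * Qhat j s a)) • ψ s (a i) = 0 := by
    rw [Finset.sum_congr rfl fun s _ => Finset.sum_comm, Finset.sum_comm]
    apply Finset.sum_eq_zero
    intro j hj
    rw [Finset.mem_filter] at hj
    apply Finset.sum_eq_zero
    intro s _
    have : ∀ a : ∀ k, A k,
        ((1 / (n : ℝ)) * ((ν s * ∏ k, π k (θ k) s (a k)) * Qhat j s a)) • ψ s (a i)
        = (1 / (n : ℝ)) • (((ν s * ∏ k, π k (θ k) s (a k)) * Qhat j s a)) • ψ s (a i) := by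
      intro a; rw [mul_smul]
    rw [Finset.sum_congr rfl fun a _ => this a, ← Finset.smul_sum, farZero j hj.2 s, smul_zero]
  -- representation of the difference
  have hrep : ghat - g = (1 / (1 - γ)) • ∑ s : ∀ k, S k, ∑ a : ∀ k, A k,
      ((ν s * ∏ k, π k (θ k) s (a k)) *
        ((1 / (n : ℝ)) * ∑ j, (Qhat j s a - Q j s a))) • ψ s (a i) := by
    rw [hghat, hg, ← smul_sub]
    congr 1
    rw [← Finset.sum_sub_distrib]
    rw [Finset.sum_congr rfl fun s _ => (Finset.sum_sub_distrib _ _).symm]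
    rw [Finset.sum_congr rfl fun s _ => Finset.sum_congr rfl fun a _ => hsplit s a]
    rw [Finset.sum_congr rfl fun s _ => Finset.sum_sub_distrib _ _, Finset.sum_sub_distrib,
      hT2, sub_zero]
  -- bound
  rw [hrep, norm_smul]
  have habs : ‖(1 : ℝ) / (1 - γ)‖ = 1 / (1 - γ) := by
    rw [Real.norm_eq_abs, abs_of_pos (by positivity)]
  rw [habs]
  have hbound : ‖∑ s : ∀ k, S k, ∑ a : ∀ k, A k,
      ((ν s * ∏ k, π k (θ k) s (a k)) *
        ((1 / (n : ℝ)) * ∑ j, (Qhat j s a - Q j s a))) • ψ s (a i)‖ ≤ ε * Mψ := by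
    calc ‖∑ s : ∀ k, S k, ∑ a : ∀ k, A k,
        ((ν s * ∏ k, π k (θ k) s (a k)) *
          ((1 / (n : ℝ)) * ∑ j, (Qhat j s a - Q j s a))) • ψ s (a i)‖
        ≤ ∑ s : ∀ k, S k, ∑ a : ∀ k, A k,
          ‖((ν s * ∏ k, π k (θ k) s (a k)) *
            ((1 / (n : ℝ)) * ∑ j, (Qhat j s a - Q j s a))) • ψ s (a i)‖ := by
          refine (norm_sum_le _ _).trans (Finset.sum_le_sum fun s _ => norm_sum_le _ _)
      _ ≤ ∑ s : ∀ k, S k, ∑ a : ∀ k, A k,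
          (ν s * ∏ k, π k (θ k) s (a k)) * (ε * Mψ) := by
          refine Finset.sum_le_sum fun s _ => Finset.sum_le_sum fun a _ => ?_
          rw [norm_smul, Real.norm_eq_abs, abs_mul]
          have hw0 : 0 ≤ ν s * ∏ k, π k (θ k) s (a k) :=
            mul_nonneg (hν0 s) (le_of_lt (Finset.prod_pos fun k _ => hπpos k (θ k) s (a k)))
          have hD : |(1 / (n : ℝ)) * ∑ j, (Qhat j s a - Q j s a)| ≤ ε := by
            rw [abs_mul]
            have h1 : |∑ j, (Qhat j s a - Q j s a)| ≤ (n : ℝ) * ε := by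
              refine (Finset.abs_sum_le_sum_abs _ _).trans ?_
              calc ∑ j, |Qhat j s a - Q j s a| ≤ ∑ _j : Fin n, ε :=
                    Finset.sum_le_sum fun j _ => hQerr j s a
                _ = (n : ℝ) * ε := by simp [mul_comm]
            have hn' : (0:ℝ) < (n : ℝ) := by exact_mod_cast hn
            calc |1 / (n : ℝ)| * |∑ j, (Qhat j s a - Q j s a)|
                ≤ (1 / (n : ℝ)) * ((n : ℝ) * ε) := by
                  rw [abs_of_pos (by positivity)]
                  exact mul_le_mul_of_nonneg_left h1 (by positivity)
              _ = ε := by field_simp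
          rw [abs_of_nonneg hw0, mul_assoc]
          refine mul_le_mul_of_nonneg_left ?_ hw0
          exact mul_le_mul hD (hψbdd s (a i)) (norm_nonneg _) hε0
      _ = ε * Mψ := by
          have : ∑ s : ∀ k, S k, ∑ a : ∀ k, A k,
              (ν s * ∏ k, π k (θ k) s (a k)) * (ε * Mψ)
              = (∑ s : ∀ k, S k, ∑ a : ∀ k, A k,
                  (ν s * ∏ k, π k (θ k) s (a k))) * (ε * Mψ) := by
            rw [Finset.sum_mul]
            exact Finset.sum_congr rfl fun s _ => by rw [Finset.sum_mul]
          rw [this, hwsum, one_mul]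
  calc (1 / (1 - γ)) * ‖∑ s : ∀ k, S k, ∑ a : ∀ k, A k,
        ((ν s * ∏ k, π k (θ k) s (a k)) *
          ((1 / (n : ℝ)) * ∑ j, (Qhat j s a - Q j s a))) • ψ s (a i)‖
      ≤ (1 / (1 - γ)) * (ε * Mψ) := by
        exact mul_le_mul_of_nonneg_left hbound (by positivity)
    _ = c₀ * φ₀ ^ κ * Mψ / (1 - γ) := by rw [hεdef]; ring
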